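/- Let G = C₃ × C₃ with generators x = (1,0) and y = (0,1). The four pairs (x,y), (x,xy), (y,xy²), (y,xy) each generate G, and the intersection Σ(x,y) ∩ Σ(x,xy) ∩ Σ(y,xy²) ∩ Σ(y,xy) equals {e}. -/
import Mathlib

/-- Additive version of Σ for abelian groups: union of the cyclic subgroups
generated by `x`, `y` and `x + y` (conjugation is trivial). -/
def ASigma {G : Type*} [AddCommGroup G] (x y : G) : Set G :=
  (AddSubgroup.zmultiples x : Set G) ∪ (AddSubgroup.zmultiples y : Set G) ∪
    (AddSubgroup.zmultiples (x + y) : Set G)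

lemma three_smul (g : ZMod 3 × ZMod 3) : (3 : ℤ) • g = 0 := by
  revert g; decide

lemma zmult_eq (g a : ZMod 3 × ZMod 3) :
    a ∈ AddSubgroup.zmultiples g ↔ a = 0 ∨ a = g ∨ a = g + g := by
  constructor
  · rintro ⟨n, rfl⟩
    have h : n = 3 * (n / 3) + n % 3 := (Int.mul_ediv_add_emod n 3).symm
    have h3 : (3 * (n / 3)) • g = 0 := by
      rw [mul_comm, mul_smul, three_smul, smul_zero]
    have key : (fun m : ℤ => m • g) n = (n % 3) • g := by
      conv_lhs => rw [h]
      simp only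
      rw [add_smul, h3, zero_add]
    have hm : n % 3 = 0 ∨ n % 3 = 1 ∨ n % 3 = 2 := by omega
    rw [key]
    rcases hm with h' | h' | h' <;> rw [h'] <;> simp [two_smul]
  · intro a
    rcases a with rfl | rfl | rfl
    · exact ⟨0, by simp⟩
    · exact ⟨1, by simp⟩
    · exact ⟨2, by simp [two_smul]⟩

lemma span_lemma (u v : ZMod 3 × ZMod 3)
    (h : ∀ g : ZMod 3 × ZMod 3, ∃ a b : Fin 3, g = (a : ℕ) • u + (b : ℕ) • v) :
    AddSubgroup.closure {u, v} = ⊤ := by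
  rw [AddSubgroup.eq_top_iff']
  intro g
  obtain ⟨a, b, rfl⟩ := h g
  exact add_mem (nsmul_mem (AddSubgroup.subset_closure (by simp)) _)
    (nsmul_mem (AddSubgroup.subset_closure (by simp)) _)

set_option synthInstance.maxSize 2000 in
set_option maxHeartbeats 1000000 in
theorem stmt2 :
    let G := ZMod 3 × ZMod 3
    let x : G := (1, 0)
    let y : G := (0, 1)
    (AddSubgroup.closure {x, y} = ⊤) ∧
    (AddSubgroup.closure {x, x + y} = (⊤ : AddSubgroup G)) ∧
    (AddSubgroup.closure {y, x + 2 • y} = (⊤ : AddSubgroup G)) ∧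
    (AddSubgroup.closure {y, x + y} = (⊤ : AddSubgroup G)) ∧
    ASigma x y ∩ ASigma x (x + y) ∩ ASigma y (x + 2 • y) ∩ ASigma y (x + y)
      = {(0 : G)} := by
  intro G x y
  simp only [G, x, y] at *
  refine ⟨span_lemma _ _ (by decide), span_lemma _ _ (by decide),
    span_lemma _ _ (by decide), span_lemma _ _ (by decide), ?_⟩
  ext g
  simp only [ASigma, Set.mem_inter_iff, Set.mem_union, SetLike.mem_coe,
    zmult_eq, Set.mem_singleton_iff]
  revert g
  decide
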